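/- For integers k ≥ 2 and n ≥ 10k⁴, if F is a family of stable k-subsets of {1,...,n} with |F| ≥ (1/(2n))·N, where N is the total number of stable k-subsets of {1,...,n}, and every element of {1,...,n} belongs to at most γ·|F| sets of F for some γ ∈ (0,1], then the probability that two sets chosen uniformly and independently from F are disjoint is at least (3/8)·(3/4 − γ). -/

import Mathlib

open Finset

attribute [local instance] Classical.propDecidable

/-- `A` is a stable subset of `{1,...,n}`: no two cyclically consecutive elements. -/
def Stable (n : ℕ) (A : Finset ℕ) : Prop :=
  (∀ i ∈ A, i + 1 ∉ A) ∧ ¬(1 ∈ A ∧ n ∈ A)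

/-- The collection of stable `k`-subsets of `{1,...,n}`. -/
noncomputable def stableSets (n k : ℕ) : Finset (Finset ℕ) :=
  ((Finset.Icc 1 n).powersetCard k).filter (fun A => Stable n A)


lemma aux_pow' (m : ℕ) : ∀ k : ℕ, ∀ n : ℕ, n^k * (n - (k+1)*m) ≤ (n-m)^(k+1) := by
  intro k
  induction k with
  | zero => intro n; simp
  | succ k ih =>
    intro n
    by_cases hc : n ≤ (k+2)*m
    · have : n - (k+2)*m = 0 := by omega
      simp [this]
    · push_neg at hc
      calc n^(k+1) * (n - (k+2)*m) = n^k * (n * (n - (k+2)*m)) := by ring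
        _ ≤ n^k * ((n-m) * (n - (k+1)*m)) := by
            apply Nat.mul_le_mul_left
            zify [show (k+2)*m ≤ n by omega, show (k+1)*m ≤ n by nlinarith, show m ≤ n by nlinarith]
            nlinarith [sq_nonneg (m:ℤ)]
        _ = (n-m) * (n^k * (n - (k+1)*m)) := by ring
        _ ≤ (n-m) * (n-m)^(k+1) := Nat.mul_le_mul_left _ (ih n)
        _ = (n-m)^(k+2) := by ring

lemma choose_ineq (n k : ℕ) (hk : 2 ≤ k) (hn : 10*k^4 ≤ n) :
    8*n*k^2*(n.choose (k-2)) ≤ (n-k).choose k := by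
  obtain ⟨K, rfl⟩ : ∃ K, k = K + 2 := ⟨k - 2, by omega⟩
  have hkf : 0 < (K+2).factorial := Nat.factorial_pos _
  have key : (K+2).factorial * (8*n*(K+2)^2*(n.choose K)) ≤ (K+2).factorial * ((n-(K+2)).choose (K+2)) := by
    rw [← Nat.descFactorial_eq_factorial_mul_choose]
    have e1 : (K+2).factorial * (8*n*(K+2)^2*(n.choose K)) =
        (8*n*(K+2)^2*((K+2)*(K+1))) * (K.factorial * n.choose K) := by
      rw [Nat.factorial_succ, Nat.factorial_succ]; ring
    rw [e1, ← Nat.descFactorial_eq_factorial_mul_choose]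
    calc (8*n*(K+2)^2*((K+2)*(K+1))) * n.descFactorial K
        ≤ (8*n*(K+2)^2*((K+2)*(K+2))) * n^K := by
          apply Nat.mul_le_mul
          · apply Nat.mul_le_mul_left
            exact Nat.mul_le_mul_left _ (by omega)
          · exact Nat.descFactorial_le_pow _ _
      _ = n^(K+1) * (8*(K+2)^4) := by ring
      _ ≤ n^(K+1) * (n - ((K+1)+1)*(2*(K+2)-1)) := by
          apply Nat.mul_le_mul_left
          have h2 : ((K+1)+1)*(2*(K+2)-1) = (K+2)*(2*K+3) := by
            have e : 2*(K+2)-1 = 2*K+3 := by omega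
            rw [e]
          rw [h2]
          have h4 : (K+2)*(2*K+3) ≤ 2*(K+2)^2 := by nlinarith
          have h5 : (K+2)^2 ≤ (K+2)^4 := Nat.pow_le_pow_right (by omega) (by omega)
          omega
      _ ≤ (n - (2*(K+2)-1))^(K+2) := aux_pow' _ (K+1) n
      _ ≤ ((n-(K+2)) + 1 - (K+2))^(K+2) := by
          apply Nat.pow_le_pow_left; omega
      _ ≤ (n-(K+2)).descFactorial (K+2) := Nat.pow_sub_le_descFactorial _ _
  simpa using Nat.le_of_mul_le_mul_left key hkf



private lemma emb_mono {k : ℕ} (e : Fin k ↪o ℕ) : StrictMono (fun i : Fin k => e i + (i : ℕ)) := by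
  intro i j hij
  have h1 : e i < e j := (OrderEmbedding.lt_iff_lt e).mpr hij
  have h2 : (i : ℕ) < (j : ℕ) := hij
  dsimp only
  omega

lemma stable_lower (n k : ℕ) (hk : 1 ≤ k) (hn : 2*k ≤ n) :
    (n-k).choose k ≤ (stableSets n k).card := by
  classical
  have hcard : ((Finset.Icc 1 (n-k)).powersetCard k).card = (n-k).choose k := by
    rw [Finset.card_powersetCard, Nat.card_Icc]
    norm_num
  rw [← hcard]
  set f : Finset ℕ → Finset ℕ := fun T =>
    if h : T.card = k then Finset.image (fun i : Fin k => T.orderEmbOfFin h i + (i : ℕ)) Finset.univ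
    else ∅ with hf
  apply Finset.card_le_card_of_injOn f
  · -- maps into stableSets
    intro T hT
    rw [Finset.mem_coe, Finset.mem_powersetCard] at hT
    obtain ⟨hTsub, hTcard⟩ := hT
    rw [hf]; simp only [dif_pos hTcard]
    set e := T.orderEmbOfFin hTcard with he
    have hbd : ∀ i : Fin k, 1 ≤ e i ∧ e i ≤ n - k := by
      intro i
      have hm : e i ∈ Finset.Icc 1 (n-k) := hTsub (T.orderEmbOfFin_mem hTcard i)
      rw [Finset.mem_Icc] at hm; exact hm
    have hmono := emb_mono e
    have hsep : ∀ a ∈ Finset.image (fun i : Fin k => e i + (i : ℕ)) Finset.univ,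
        ∀ b ∈ Finset.image (fun i : Fin k => e i + (i : ℕ)) Finset.univ, a < b → a + 2 ≤ b := by
      intro a ha b hb hab
      simp only [Finset.mem_image, Finset.mem_univ, true_and] at ha hb
      obtain ⟨i, rfl⟩ := ha; obtain ⟨j, rfl⟩ := hb
      have hij : i < j := hmono.lt_iff_lt.mp hab
      have h1 : e i < e j := (OrderEmbedding.lt_iff_lt e).mpr hij
      have h2 : (i : ℕ) < (j : ℕ) := hij
      omega
    have hub : ∀ a ∈ Finset.image (fun i : Fin k => e i + (i : ℕ)) Finset.univ,
        1 ≤ a ∧ a ≤ n - 1 := by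
      intro a ha
      simp only [Finset.mem_image, Finset.mem_univ, true_and] at ha
      obtain ⟨i, rfl⟩ := ha
      have h1 := (hbd i).1
      have h2 := (hbd i).2
      have h3 : (i:ℕ) < k := i.isLt
      omega
    rw [Finset.mem_coe, stableSets, Finset.mem_filter, Finset.mem_powersetCard]
    refine ⟨⟨?_, ?_⟩, ?_, ?_⟩
    · intro a ha
      have := hub a ha
      rw [Finset.mem_Icc]; omega
    · rw [Finset.card_image_of_injective _ hmono.injective, Finset.card_univ, Fintype.card_fin]
    · intro a ha hcontra
      have := hsep a ha (a+1) hcontra (by omega)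
      omega
    · rintro ⟨-, hn_mem⟩
      have := hub n hn_mem
      omega
  · -- injective
    intro T hT T' hT' heq
    rw [Finset.mem_coe, Finset.mem_powersetCard] at hT hT'
    obtain ⟨hTsub, hTcard⟩ := hT
    obtain ⟨hTsub', hTcard'⟩ := hT'
    rw [hf] at heq
    simp only [dif_pos hTcard, dif_pos hTcard'] at heq
    have hmonoT := emb_mono (T.orderEmbOfFin hTcard)
    have hmonoT' := emb_mono (T'.orderEmbOfFin hTcard')
    have hAcard : (Finset.image (fun i : Fin k => T.orderEmbOfFin hTcard i + (i : ℕ))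
        Finset.univ).card = k := by
      rw [Finset.card_image_of_injective _ hmonoT.injective, Finset.card_univ, Fintype.card_fin]
    have hu1 : (fun i : Fin k => T.orderEmbOfFin hTcard i + (i : ℕ)) =
        (Finset.image (fun i : Fin k => T.orderEmbOfFin hTcard i + (i : ℕ))
          Finset.univ).orderEmbOfFin hAcard :=
      Finset.orderEmbOfFin_unique hAcard
        (fun i => Finset.mem_image_of_mem _ (Finset.mem_univ i)) hmonoT
    have hu2 : (fun i : Fin k => T'.orderEmbOfFin hTcard' i + (i : ℕ)) =
        (Finset.image (fun i : Fin k => T.orderEmbOfFin hTcard i + (i : ℕ))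
          Finset.univ).orderEmbOfFin hAcard :=
      Finset.orderEmbOfFin_unique hAcard
        (fun i => by rw [heq]; exact Finset.mem_image_of_mem _ (Finset.mem_univ i)) hmonoT'
    have hee : ∀ i : Fin k, T.orderEmbOfFin hTcard i = T'.orderEmbOfFin hTcard' i := by
      intro i
      have e1 := congrFun hu1 i
      have e2 := congrFun hu2 i
      omega
    have hfe : ⇑(T.orderEmbOfFin hTcard) = ⇑(T'.orderEmbOfFin hTcard') := funext hee
    have hset : (T : Set ℕ) = (T' : Set ℕ) := by
      rw [← Finset.range_orderEmbOfFin T hTcard, ← Finset.range_orderEmbOfFin T' hTcard', hfe]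
    exact Finset.coe_injective hset



-- swap lemma 1
lemma swap1 {n : ℕ} {F : Finset (Finset ℕ)} (hsub : ∀ B ∈ F, B ⊆ Finset.Icc 1 n) (w : ℕ → ℝ) :
    ∑ B ∈ F, ∑ j ∈ B, w j
      = ∑ j ∈ Finset.Icc 1 n, ((F.filter (fun B => j ∈ B)).card : ℝ) * w j := by
  classical
  have h1 : ∀ B ∈ F, ∑ j ∈ B, w j = ∑ j ∈ Finset.Icc 1 n, if j ∈ B then w j else 0 := by
    intro B hB
    rw [Finset.sum_ite_mem, Finset.inter_eq_right.mpr (hsub B hB)]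
  rw [Finset.sum_congr rfl h1, Finset.sum_comm]
  refine Finset.sum_congr rfl fun j _ => ?_
  rw [← Finset.sum_filter, Finset.sum_const, nsmul_eq_mul]

-- swap lemma 2 (pairs)
lemma swap2 {n : ℕ} {F : Finset (Finset ℕ)} (hsub : ∀ B ∈ F, B ⊆ Finset.Icc 1 n)
    (w : ℕ → ℕ → ℝ) :
    ∑ B ∈ F, ∑ j ∈ B, ∑ j' ∈ B.erase j, w j j'
      = ∑ j ∈ Finset.Icc 1 n, ∑ j' ∈ (Finset.Icc 1 n).erase j,
          ((F.filter (fun B => j ∈ B ∧ j' ∈ B)).card : ℝ) * w j j' := by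
  classical
  have h1 : ∀ B ∈ F, ∑ j ∈ B, ∑ j' ∈ B.erase j, w j j'
      = ∑ j ∈ Finset.Icc 1 n, ∑ j' ∈ (Finset.Icc 1 n).erase j,
          if j ∈ B ∧ j' ∈ B then w j j' else 0 := by
    intro B hB
    have hout : ∀ j ∈ B, ∑ j' ∈ B.erase j, w j j'
        = ∑ j' ∈ (Finset.Icc 1 n).erase j, if j' ∈ B then w j j' else 0 := by
      intro j hj
      rw [Finset.sum_ite_mem]
      congr 1
      ext x
      simp only [Finset.mem_inter, Finset.mem_erase, Finset.mem_Icc]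
      constructor
      · intro h
        have hxI := hsub B hB h.2
        rw [Finset.mem_Icc] at hxI
        tauto
      · tauto
    have h2 : ∀ j ∈ Finset.Icc 1 n,
        (if j ∈ B then (∑ j' ∈ (Finset.Icc 1 n).erase j, if j' ∈ B then w j j' else 0) else 0)
        = ∑ j' ∈ (Finset.Icc 1 n).erase j, if j ∈ B ∧ j' ∈ B then w j j' else 0 := by
      intro j _
      by_cases hj : j ∈ B
      · simp only [hj, if_true, true_and]
      · simp only [hj, if_false, false_and, Finset.sum_const_zero]
    calc ∑ j ∈ B, ∑ j' ∈ B.erase j, w j j'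
        = ∑ j ∈ B, ∑ j' ∈ (Finset.Icc 1 n).erase j, if j' ∈ B then w j j' else 0 :=
          Finset.sum_congr rfl hout
      _ = ∑ j ∈ Finset.Icc 1 n ∩ B, ∑ j' ∈ (Finset.Icc 1 n).erase j,
            if j' ∈ B then w j j' else 0 := by
          rw [Finset.inter_eq_right.mpr (hsub B hB)]
      _ = ∑ j ∈ Finset.Icc 1 n, if j ∈ B then
            (∑ j' ∈ (Finset.Icc 1 n).erase j, if j' ∈ B then w j j' else 0) else 0 :=
          (Finset.sum_ite_mem _ _ _).symm
      _ = ∑ j ∈ Finset.Icc 1 n, ∑ j' ∈ (Finset.Icc 1 n).erase j,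
            if j ∈ B ∧ j' ∈ B then w j j' else 0 := Finset.sum_congr rfl h2
  rw [Finset.sum_congr rfl h1, Finset.sum_comm]
  refine Finset.sum_congr rfl fun j _ => ?_
  rw [Finset.sum_comm]
  refine Finset.sum_congr rfl fun j' _ => ?_
  rw [← Finset.sum_filter, Finset.sum_const, nsmul_eq_mul]



lemma mem_F_props {n k : ℕ} {F : Finset (Finset ℕ)} (hF : F ⊆ stableSets n k) :
    ∀ B ∈ F, B ⊆ Finset.Icc 1 n ∧ B.card = k := by
  intro B hB
  have := hF hB
  rw [stableSets, Finset.mem_filter, Finset.mem_powersetCard] at this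
  exact this.1

lemma pairdeg {n k : ℕ} {F : Finset (Finset ℕ)} (hF : F ⊆ stableSets n k)
    {j j' : ℕ} (hjj : j ≠ j') :
    (F.filter (fun B => j ∈ B ∧ j' ∈ B)).card ≤ n.choose (k-2) := by
  classical
  have hcard : ((Finset.Icc 1 n).powersetCard (k-2)).card = n.choose (k-2) := by
    rw [Finset.card_powersetCard, Nat.card_Icc]
    norm_num
  rw [← hcard]
  apply Finset.card_le_card_of_injOn (fun B => (B.erase j).erase j')
  · intro B hB
    rw [Finset.mem_coe, Finset.mem_filter] at hB
    obtain ⟨hBF, hjB, hj'B⟩ := hB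
    obtain ⟨hBsub, hBcard⟩ := mem_F_props hF B hBF
    rw [Finset.mem_coe, Finset.mem_powersetCard]
    constructor
    · exact fun x hx => hBsub (Finset.mem_of_mem_erase (Finset.mem_of_mem_erase hx))
    · rw [Finset.card_erase_of_mem (Finset.mem_erase.mpr ⟨Ne.symm hjj, hj'B⟩),
        Finset.card_erase_of_mem hjB, hBcard]
      omega
  · intro B hB B' hB' heq
    simp only [Finset.coe_filter, Set.mem_setOf_eq] at hB hB'
    obtain ⟨hBF, hjB, hj'B⟩ := hB
    obtain ⟨hBF', hjB', hj'B'⟩ := hB'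
    have key : ∀ (C : Finset ℕ), j ∈ C → j' ∈ C → insert j (insert j' ((C.erase j).erase j')) = C := by
      intro C hj1 hj2
      ext x
      simp only [Finset.mem_insert, Finset.mem_erase]
      constructor
      · rintro (rfl | rfl | ⟨-, -, h⟩) <;> assumption
      · intro hx
        by_cases h1 : x = j
        · left; exact h1
        · by_cases h2 : x = j'
          · right; left; exact h2
          · right; right; exact ⟨h2, h1, hx⟩
    have heq' : (B.erase j).erase j' = (B'.erase j).erase j' := heq
    rw [← key B hjB hj'B, ← key B' hjB' hj'B', heq']

lemma count_pairs {n k : ℕ} {F : Finset (Finset ℕ)} (hF : F ⊆ stableSets n k) (hk : 1 ≤ k) :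
    F.card^2 ≤ 2 * ((F.powersetCard 2).filter
        (fun e => ∀ A ∈ e, ∀ B ∈ e, A ≠ B → Disjoint A B)).card
      + ∑ j ∈ Finset.Icc 1 n, (F.filter (fun B => j ∈ B)).card^2 := by
  classical
  have hprops := mem_F_props hF
  have hne : ∀ B ∈ F, B.Nonempty := by
    intro B hB
    rw [← Finset.card_pos, (hprops B hB).2]
    omega
  -- split F ×ˢ F
  have hsplit : ((F ×ˢ F).filter (fun q => Disjoint q.1 q.2)).card
      + ((F ×ˢ F).filter (fun q => ¬ Disjoint q.1 q.2)).card = F.card^2 := by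
    rw [Finset.card_filter_add_card_filter_not, Finset.card_product, sq]
  -- disjoint part ≤ 2 * E
  have hdisj : ((F ×ˢ F).filter (fun q => Disjoint q.1 q.2)).card
      ≤ 2 * ((F.powersetCard 2).filter
        (fun e => ∀ A ∈ e, ∀ B ∈ e, A ≠ B → Disjoint A B)).card := by
    set D := (F ×ˢ F).filter (fun q => Disjoint q.1 q.2) with hD
    have hDne : ∀ q ∈ D, q.1 ≠ q.2 := by
      intro q hq
      rw [hD, Finset.mem_filter, Finset.mem_product] at hq
      intro hcontra
      have h1 := hne q.1 hq.1.1
      have h2 := hq.2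
      rw [hcontra] at h2
      exact (hne q.2 hq.1.2).ne_empty (by simpa using disjoint_self.mp h2)
    have himg : D.image (fun q => ({q.1, q.2} : Finset (Finset ℕ)))
        ⊆ (F.powersetCard 2).filter
          (fun e => ∀ A ∈ e, ∀ B ∈ e, A ≠ B → Disjoint A B) := by
      intro e he
      rw [Finset.mem_image] at he
      obtain ⟨q, hq, rfl⟩ := he
      have hq' := hq
      rw [hD, Finset.mem_filter, Finset.mem_product] at hq'
      rw [Finset.mem_filter, Finset.mem_powersetCard]
      refine ⟨⟨?_, ?_⟩, ?_⟩
      · intro x hx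
        rw [Finset.mem_insert, Finset.mem_singleton] at hx
        rcases hx with rfl | rfl
        · exact hq'.1.1
        · exact hq'.1.2
      · rw [Finset.card_pair (hDne q hq)]
      · intro A hA B hB hAB
        rw [Finset.mem_insert, Finset.mem_singleton] at hA hB
        rcases hA with rfl | rfl <;> rcases hB with rfl | rfl
        · exact absurd rfl hAB
        · exact hq'.2
        · exact hq'.2.symm
        · exact absurd rfl hAB
    calc D.card = ∑ e ∈ D.image (fun q => ({q.1, q.2} : Finset (Finset ℕ))),
          (D.filter (fun q => ({q.1, q.2} : Finset (Finset ℕ)) = e)).card :=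
          Finset.card_eq_sum_card_image _ _
      _ ≤ ∑ _e ∈ D.image (fun q => ({q.1, q.2} : Finset (Finset ℕ))), 2 := by
          apply Finset.sum_le_sum
          intro e he
          rw [Finset.mem_image] at he
          obtain ⟨q, hq, rfl⟩ := he
          have hsub2 : D.filter (fun r => ({r.1, r.2} : Finset (Finset ℕ)) = {q.1, q.2})
              ⊆ {(q.1, q.2), (q.2, q.1)} := by
            intro r hr
            rw [Finset.mem_filter] at hr
            have hpair : ({r.1, r.2} : Finset (Finset ℕ)) = {q.1, q.2} := hr.2
            have : (r.1 = q.1 ∧ r.2 = q.2) ∨ (r.1 = q.2 ∧ r.2 = q.1) := by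
              have hco : ({r.1, r.2} : Set (Finset ℕ)) = {q.1, q.2} := by
                have := congrArg (fun (s : Finset (Finset ℕ)) => (s : Set (Finset ℕ))) hpair
                simpa using this
              rw [Set.pair_eq_pair_iff] at hco
              tauto
            rw [Finset.mem_insert, Finset.mem_singleton]
            rcases this with ⟨h1, h2⟩ | ⟨h1, h2⟩
            · left; exact Prod.ext h1 h2
            · right; exact Prod.ext h1 h2
          calc (D.filter (fun r => ({r.1, r.2} : Finset (Finset ℕ)) = {q.1, q.2})).card
              ≤ ({(q.1, q.2), (q.2, q.1)} : Finset ((Finset ℕ) × (Finset ℕ))).card :=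
                Finset.card_le_card hsub2
            _ ≤ 2 := Finset.card_insert_le _ _ |>.trans (by simp)
      _ = 2 * (D.image (fun q => ({q.1, q.2} : Finset (Finset ℕ)))).card := by
          rw [Finset.sum_const, smul_eq_mul, mul_comm]
      _ ≤ 2 * ((F.powersetCard 2).filter
          (fun e => ∀ A ∈ e, ∀ B ∈ e, A ≠ B → Disjoint A B)).card := by
          exact Nat.mul_le_mul_left _ (Finset.card_le_card himg)
  -- intersecting part ≤ sum of squares
  have hint : ((F ×ˢ F).filter (fun q => ¬ Disjoint q.1 q.2)).card
      ≤ ∑ j ∈ Finset.Icc 1 n, (F.filter (fun B => j ∈ B)).card^2 := by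
    calc ((F ×ˢ F).filter (fun q => ¬ Disjoint q.1 q.2)).card
        = ∑ q ∈ (F ×ˢ F).filter (fun q => ¬ Disjoint q.1 q.2), 1 := by
          rw [Finset.sum_const, smul_eq_mul, mul_one]
      _ ≤ ∑ q ∈ (F ×ˢ F).filter (fun q => ¬ Disjoint q.1 q.2), (q.1 ∩ q.2).card := by
          apply Finset.sum_le_sum
          intro q hq
          rw [Finset.mem_filter] at hq
          have := Finset.not_disjoint_iff_nonempty_inter.mp hq.2
          exact Finset.card_pos.mpr this
      _ ≤ ∑ q ∈ F ×ˢ F, (q.1 ∩ q.2).card :=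
          Finset.sum_le_sum_of_subset (Finset.filter_subset _ _)
      _ = ∑ q ∈ F ×ˢ F, ∑ j ∈ Finset.Icc 1 n, (if j ∈ q.1 ∧ j ∈ q.2 then 1 else 0) := by
          apply Finset.sum_congr rfl
          intro q hq
          rw [Finset.mem_product] at hq
          have h1 : q.1 ∩ q.2 = (Finset.Icc 1 n).filter (fun j => j ∈ q.1 ∧ j ∈ q.2) := by
            ext x
            simp only [Finset.mem_inter, Finset.mem_filter]
            constructor
            · intro h
              exact ⟨(hprops q.1 hq.1).1 h.1, h⟩
            · tauto
          rw [h1, Finset.card_filter]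
      _ = ∑ j ∈ Finset.Icc 1 n, ∑ q ∈ F ×ˢ F, (if j ∈ q.1 ∧ j ∈ q.2 then 1 else 0) :=
          Finset.sum_comm
      _ = ∑ j ∈ Finset.Icc 1 n, (F.filter (fun B => j ∈ B)).card^2 := by
          apply Finset.sum_congr rfl
          intro j _
          rw [← Finset.card_filter]
          have : (F ×ˢ F).filter (fun q => j ∈ q.1 ∧ j ∈ q.2)
              = (F.filter (fun B => j ∈ B)) ×ˢ (F.filter (fun B => j ∈ B)) := by
            ext q
            simp only [Finset.mem_filter, Finset.mem_product]
            tauto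
          rw [this, Finset.card_product, sq]
  omega



-- final algebra lemma
lemma final_algebra (f Q E γ c : ℝ) (hf : 0 < f) (hQ0 : 0 ≤ Q)
    (hcount : f^2 ≤ 2*E + Q) (hquad : Q^2 ≤ γ*f^2*Q + c * f^3) (hc : c ≤ f/4)
    (hγ0 : 0 < γ) (hγ : γ < 3/4) :
    (3/8) * (3/4 - γ) ≤ 2*E/f^2 := by
  have hquad' : Q^2 ≤ γ*f^2*Q + (1/4)*f^4 := by nlinarith [pow_pos hf 3]
  have hQle : Q ≤ (23/32 + 3/8*γ)*f^2 := by
    by_contra h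
    push_neg at h
    have h2 : 0 < Q + (23/32 + 3/8*γ)*f^2 - γ*f^2 := by nlinarith [pow_pos hf 2]
    nlinarith [mul_pos (sub_pos.mpr h) h2,
      mul_nonneg (mul_nonneg (by linarith : (0:ℝ) ≤ 3 - 4*γ) (by linarith : (0:ℝ) ≤ 60*γ + 91))
        (by positivity : (0:ℝ) ≤ f^4)]
  rw [le_div_iff₀ (by positivity : (0:ℝ) < f^2)]
  nlinarith [hcount, hQle]

theorem stmt_10 (n k : ℕ) (hk : 2 ≤ k) (hn : 10 * k ^ 4 ≤ n) (F : Finset (Finset ℕ))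
    (hF : F ⊆ stableSets n k)
    (hsize : (1 / (2 * n)) * ((stableSets n k).card : ℝ) ≤ (F.card : ℝ))
    (γ : ℝ) (hγ0 : 0 < γ) (hγ1 : γ ≤ 1)
    (hpop : ∀ j ∈ Finset.Icc 1 n, ((F.filter (fun A => j ∈ A)).card : ℝ) ≤ γ * F.card) :
    (3 / 8) * (3 / 4 - γ)
      ≤ 2 * (((F.powersetCard 2).filter
            (fun e => ∀ A ∈ e, ∀ B ∈ e, A ≠ B → Disjoint A B)).card : ℝ)
          / ((F.card : ℝ) ^ 2) := by
  classical
  by_cases hγ : (3:ℝ)/4 ≤ γ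
  · have h1 : (3/8 : ℝ) * (3/4 - γ) ≤ 0 := by nlinarith
    have h2 : (0:ℝ) ≤ 2 * ((((F.powersetCard 2).filter
        (fun e => ∀ A ∈ e, ∀ B ∈ e, A ≠ B → Disjoint A B)).card : ℝ)) / ((F.card : ℝ)^2) := by
      positivity
    linarith
  push_neg at hγ
  -- basic numeric facts
  have hk4 : k ≤ k^4 := Nat.le_self_pow (by norm_num) k
  have hn2k : 2*k ≤ n := by omega
  have hn0 : 0 < n := by omega
  -- abbreviations
  set d : ℕ → ℝ := fun j => ((F.filter (fun A => j ∈ A)).card : ℝ) with hd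
  have hd0 : ∀ j, 0 ≤ d j := fun j => Nat.cast_nonneg _
  set f : ℝ := (F.card : ℝ) with hf
  set Q : ℝ := ∑ j ∈ Finset.Icc 1 n, (d j)^2 with hQ
  set E : ℕ := ((F.powersetCard 2).filter
      (fun e => ∀ A ∈ e, ∀ B ∈ e, A ≠ B → Disjoint A B)).card with hE
  have hQ0 : 0 ≤ Q := Finset.sum_nonneg fun j _ => sq_nonneg _
  have hsub : ∀ B ∈ F, B ⊆ Finset.Icc 1 n := fun B hB => (mem_F_props hF B hB).1
  have hcardk : ∀ B ∈ F, B.card = k := fun B hB => (mem_F_props hF B hB).2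
  -- f lower bound
  have hNlb : 8*n*k^2*(n.choose (k-2)) ≤ (stableSets n k).card :=
    le_trans (choose_ineq n k hk hn) (stable_lower n k (by omega) hn2k)
  have hflb : 4*(k:ℝ)^2*((n.choose (k-2) : ℕ) : ℝ) ≤ f := by
    have h8 : ((8*n*k^2*(n.choose (k-2)) : ℕ) : ℝ) ≤ ((stableSets n k).card : ℝ) :=
      Nat.cast_le.mpr hNlb
    have hn0' : (0:ℝ) < (n:ℝ) := by exact_mod_cast hn0
    have hstep : (1/(2*(n:ℝ))) * ((8*n*k^2*(n.choose (k-2)) : ℕ) : ℝ)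
        ≤ (1/(2*(n:ℝ))) * ((stableSets n k).card : ℝ) :=
      mul_le_mul_of_nonneg_left h8 (by positivity)
    have heq : (1/(2*(n:ℝ))) * ((8*n*k^2*(n.choose (k-2)) : ℕ) : ℝ)
        = 4*(k:ℝ)^2*((n.choose (k-2) : ℕ) : ℝ) := by
      push_cast
      field_simp
      ring
    rw [heq] at hstep
    exact le_trans hstep hsize
  have hC2pos : (0:ℝ) < ((n.choose (k-2) : ℕ) : ℝ) := by
    have := Nat.choose_pos (show k - 2 ≤ n by omega)
    exact_mod_cast this
  have hfpos : 0 < f := lt_of_lt_of_le (by positivity) hflb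
  -- counting inequality
  have hcount : f^2 ≤ 2*(E:ℝ) + Q := by
    have hc := count_pairs hF (by omega : 1 ≤ k)
    have hcast := (Nat.cast_le (α := ℝ)).mpr hc
    push_cast at hcast
    exact hcast
  -- sum identities
  have hQ1 : ∑ B ∈ F, (∑ j ∈ B, d j) = Q := by
    rw [swap1 hsub d]
    exact Finset.sum_congr rfl fun j _ => (sq (d j)) ▸ rfl
  have hsum_d : ∑ j ∈ Finset.Icc 1 n, d j = (k:ℝ) * f := by
    have h1 := swap1 hsub (fun _ => (1:ℝ))
    simp only [mul_one] at h1
    have h2 : ∀ B ∈ F, ∑ _j ∈ B, (1:ℝ) = (k:ℝ) := by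
      intro B hB
      rw [Finset.sum_const, nsmul_eq_mul, mul_one, hcardk B hB]
    rw [Finset.sum_congr rfl h2, Finset.sum_const, nsmul_eq_mul] at h1
    rw [← h1, hf]
    ring
  -- Cauchy-Schwarz
  have hCS : Q^2 ≤ f * ∑ B ∈ F, (∑ j ∈ B, d j)^2 := by
    have := sq_sum_le_card_mul_sum_sq (s := F) (f := fun B => ∑ j ∈ B, d j)
    rw [hQ1] at this
    exact this
  -- expansion
  have hexp : ∑ B ∈ F, (∑ j ∈ B, d j)^2
      = (∑ B ∈ F, ∑ j ∈ B, (d j)^2)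
        + (∑ B ∈ F, ∑ j ∈ B, ∑ j' ∈ B.erase j, d j * d j') := by
    rw [← Finset.sum_add_distrib]
    refine Finset.sum_congr rfl fun B _ => ?_
    rw [sq, Finset.sum_mul_sum, ← Finset.sum_add_distrib]
    refine Finset.sum_congr rfl fun j hj => ?_
    rw [← Finset.add_sum_erase _ _ hj, sq]
  -- diagonal bound
  have hdiag : ∑ B ∈ F, ∑ j ∈ B, (d j)^2 ≤ γ * f * Q := by
    calc ∑ B ∈ F, ∑ j ∈ B, (d j)^2 ≤ ∑ B ∈ F, ∑ j ∈ B, (γ*f) * d j := by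
          refine Finset.sum_le_sum fun B hB => Finset.sum_le_sum fun j hj => ?_
          have hjI : j ∈ Finset.Icc 1 n := hsub B hB hj
          have hb := hpop j hjI
          rw [sq]
          exact mul_le_mul_of_nonneg_right hb (hd0 j)
      _ = γ * f * ∑ B ∈ F, ∑ j ∈ B, d j := by
          rw [Finset.mul_sum]
          exact Finset.sum_congr rfl fun B _ => (Finset.mul_sum _ _ _).symm
      _ = γ * f * Q := by rw [hQ1]
  -- off-diagonal bound
  have hoff : ∑ B ∈ F, ∑ j ∈ B, ∑ j' ∈ B.erase j, d j * d j'
      ≤ ((n.choose (k-2) : ℕ) : ℝ) * ((k:ℝ)*f)^2 := by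
    rw [swap2 hsub]
    have step1 : ∑ j ∈ Finset.Icc 1 n, ∑ j' ∈ (Finset.Icc 1 n).erase j,
          ((F.filter (fun B => j ∈ B ∧ j' ∈ B)).card : ℝ) * (d j * d j')
        ≤ ∑ j ∈ Finset.Icc 1 n, ∑ j' ∈ (Finset.Icc 1 n).erase j,
          ((n.choose (k-2) : ℕ) : ℝ) * (d j * d j') := by
      refine Finset.sum_le_sum fun j _ => Finset.sum_le_sum fun j' hj' => ?_
      have hne : j ≠ j' := (Finset.mem_erase.mp hj').1.symm
      have hp : ((F.filter (fun B => j ∈ B ∧ j' ∈ B)).card : ℝ)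
          ≤ ((n.choose (k-2) : ℕ) : ℝ) := Nat.cast_le.mpr (pairdeg hF hne)
      exact mul_le_mul_of_nonneg_right hp (mul_nonneg (hd0 j) (hd0 j'))
    have step2 : ∑ j ∈ Finset.Icc 1 n, ∑ j' ∈ (Finset.Icc 1 n).erase j,
          ((n.choose (k-2) : ℕ) : ℝ) * (d j * d j')
        ≤ ∑ j ∈ Finset.Icc 1 n, ∑ j' ∈ Finset.Icc 1 n,
          ((n.choose (k-2) : ℕ) : ℝ) * (d j * d j') := by
      refine Finset.sum_le_sum fun j _ => ?_
      refine Finset.sum_le_sum_of_subset_of_nonneg (Finset.erase_subset _ _) fun j' _ _ => ?_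
      positivity
    have step3 : ∑ j ∈ Finset.Icc 1 n, ∑ j' ∈ Finset.Icc 1 n,
          ((n.choose (k-2) : ℕ) : ℝ) * (d j * d j')
        = ((n.choose (k-2) : ℕ) : ℝ) * ((k:ℝ)*f)^2 := by
      have : ∑ j ∈ Finset.Icc 1 n, ∑ j' ∈ Finset.Icc 1 n,
            ((n.choose (k-2) : ℕ) : ℝ) * (d j * d j')
          = ((n.choose (k-2) : ℕ) : ℝ) *
            ((∑ j ∈ Finset.Icc 1 n, d j) * (∑ j' ∈ Finset.Icc 1 n, d j')) := by
        rw [Finset.sum_mul_sum, Finset.mul_sum]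
        refine Finset.sum_congr rfl fun j _ => ?_
        rw [Finset.mul_sum]
      rw [this, hsum_d, sq]
    linarith
  -- quadratic inequality
  have hquad : Q^2 ≤ γ*f^2*Q + (((n.choose (k-2) : ℕ) : ℝ) * (k:ℝ)^2) * f^3 := by
    calc Q^2 ≤ f * ∑ B ∈ F, (∑ j ∈ B, d j)^2 := hCS
      _ ≤ f * (γ * f * Q + ((n.choose (k-2) : ℕ) : ℝ) * ((k:ℝ)*f)^2) := by
          rw [hexp]
          exact mul_le_mul_of_nonneg_left (add_le_add hdiag hoff) (le_of_lt hfpos)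
      _ = γ*f^2*Q + (((n.choose (k-2) : ℕ) : ℝ) * (k:ℝ)^2) * f^3 := by ring
  have hc4 : ((n.choose (k-2) : ℕ) : ℝ) * (k:ℝ)^2 ≤ f/4 := by linarith
  exact final_algebra f Q (E:ℝ) γ _ hfpos hQ0 hcount hquad hc4 hγ0 hγ
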